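/- Let R, S ∈ ℂ^{n×n} be upper triangular matrices such that |r_{ii}| = |s_{ii}| for all i, and such that |r_{ii}| ≠ |r_{jj}| whenever i ≠ j. If U ∈ ℂ^{n×n} is a unitary matrix satisfying R Ū = U S, where Ū is the entrywise conjugate of U, then U is a diagonal matrix. -/

import Mathlib

/-- If `R, S` are upper triangular with `|r_{ii}| = |s_{ii}|`, the `|r_{ii}|` pairwise
distinct, and `U` is unitary with `R Ū = U S`, then `U` is diagonal. -/
theorem unitary_diag_of_contriangular_intertwine {n : ℕ}
    (R S U : Matrix (Fin n) (Fin n) ℂ)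
    (hR : ∀ i j, j < i → R i j = 0)
    (hS : ∀ i j, j < i → S i j = 0)
    (habs : ∀ i, ‖R i i‖ = ‖S i i‖)
    (hdist : ∀ i j, i ≠ j → ‖R i i‖ ≠ ‖R j j‖)
    (hU : U ∈ Matrix.unitaryGroup (Fin n) ℂ)
    (heq : R * U.map (starRingEnd ℂ) = U * S) :
    U.IsDiag := by
  -- Step 1: the strictly lower part of U vanishes.
  have hlow : ∀ m : ℕ, ∀ i j : Fin n, (n - i.val) * n + j.val ≤ m →
      j.val < i.val → U i j = 0 := by
    intro m
    induction m using Nat.strong_induction_on with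
    | _ m ih =>
      intro i j hm hij
      have h : (R * U.map (starRingEnd ℂ)) i j = (U * S) i j := by rw [heq]
      rw [Matrix.mul_apply, Matrix.mul_apply] at h
      have hL : ∑ k, R i k * (U.map (starRingEnd ℂ)) k j
          = R i i * starRingEnd ℂ (U i j) := by
        rw [Finset.sum_eq_single_of_mem i (Finset.mem_univ i)]
        · rw [Matrix.map_apply]
        · intro k _ hk
          rcases lt_or_gt_of_ne (Fin.val_ne_of_ne hk) with hlt | hgt
          · rw [hR i k (by exact hlt), zero_mul]
          · have hz : U k j = 0 := by
              have hmul : (n - k.val) * n < (n - i.val) * n :=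
                (Nat.mul_lt_mul_right i.pos).mpr (by omega)
              exact ih ((n - k.val) * n + j.val) (by omega) k j le_rfl
                (lt_trans hij hgt)
            rw [Matrix.map_apply, hz, map_zero, mul_zero]
      have hRhs : ∑ k, U i k * S k j = U i j * S j j := by
        rw [Finset.sum_eq_single_of_mem j (Finset.mem_univ j)]
        intro k _ hk
        rcases lt_or_gt_of_ne (Fin.val_ne_of_ne hk) with hlt | hgt
        · have hz : U i k = 0 := ih ((n - i.val) * n + k.val) (by omega) i k le_rfl (by omega)
          rw [hz, zero_mul]
        · rw [hS k j (by exact hgt), mul_zero]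
      rw [hL, hRhs] at h
      by_contra h0
      have habsU : ‖U i j‖ ≠ 0 := by
        simpa using h0
      have h1 : ‖R i i‖ * ‖U i j‖
          = ‖U i j‖ * ‖R j j‖ := by
        have := congrArg norm h
        rwa [norm_mul, norm_mul, Complex.norm_conj, ← habs j] at this
      rw [mul_comm (‖U i j‖)] at h1
      exact hdist i j (Fin.ne_of_val_ne (by omega)) (mul_right_cancel₀ habsU h1)
  have hlow' : ∀ i j : Fin n, j.val < i.val → U i j = 0 := fun i j h =>
    hlow ((n - i.val) * n + j.val) i j le_rfl h
  -- Step 2: the strictly upper part vanishes, using star U * U = 1.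
  have hstar : star U * U = 1 := hU.1
  have hup : ∀ ii : ℕ, ∀ i j : Fin n, i.val ≤ ii → i.val < j.val → U i j = 0 := by
    intro ii
    induction ii using Nat.strong_induction_on with
    | _ ii ih =>
      intro i j hii hij
      have hcol : ∀ k : Fin n, k ≠ i → U k i = 0 := by
        intro k hk
        rcases lt_or_gt_of_ne (Fin.val_ne_of_ne hk) with hlt | hgt
        · exact ih k.val (by omega) k i le_rfl hlt
        · exact hlow' k i hgt
      have hdne : U i i ≠ 0 := by
        have h1 : (star U * U) i i = (1 : Matrix (Fin n) (Fin n) ℂ) i i := by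
          rw [hstar]
        rw [Matrix.mul_apply, Matrix.one_apply_eq] at h1
        rw [Finset.sum_eq_single_of_mem i (Finset.mem_univ i)
          (fun k _ hk => by rw [Matrix.star_apply, hcol k hk, star_zero, zero_mul])] at h1
        intro hz
        rw [Matrix.star_apply, hz, star_zero, zero_mul] at h1
        exact one_ne_zero h1.symm
      have h0 : (star U * U) i j = (1 : Matrix (Fin n) (Fin n) ℂ) i j := by
        rw [hstar]
      rw [Matrix.mul_apply, Matrix.one_apply_ne (Fin.ne_of_val_ne (by omega))] at h0
      rw [Finset.sum_eq_single_of_mem i (Finset.mem_univ i)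
        (fun k _ hk => by rw [Matrix.star_apply, hcol k hk, star_zero, zero_mul])] at h0
      rw [Matrix.star_apply] at h0
      rcases mul_eq_zero.mp h0 with hz | hz
      · exact absurd (star_eq_zero.mp hz) hdne
      · exact hz
  intro i j hij
  rcases lt_trichotomy i.val j.val with h | h | h
  · exact hup i.val i j le_rfl h
  · exact absurd (Fin.ext h) hij
  · exact hlow' i j h
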